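/- (Contraction theorem) Let uᵏ ∈ ℝⁿ × ℝᵐ, let ũᵏ be a prediction from uᵏ, and let u^{k+1} = uᵏ − M(uᵏ − ũᵏ). Then for every VI solution u* ∈ Ω*, ‖u^{k+1} − u*‖²_H ≤ ‖uᵏ − u*‖²_H − ‖uᵏ − ũᵏ‖²_G. -/

import Mathlib

open Matrix

noncomputable section

/-- A primal-dual pair `(x, y) ∈ ℝⁿ × ℝᵐ`. -/
abbrev PDVec (n m : ℕ) := (Fin n → ℝ) × (Fin m → ℝ)

/-- View a primal-dual pair as a single vector indexed by `Fin n ⊕ Fin m`. -/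
def pdToVec {n m : ℕ} (u : PDVec n m) : Fin n ⊕ Fin m → ℝ := Sum.elim u.1 u.2

/-- `θ(u) = f(x) + g(y)`. -/
def pdTheta {n m : ℕ} (f : (Fin n → ℝ) → ℝ) (g : (Fin m → ℝ) → ℝ) (u : PDVec n m) : ℝ :=
  f u.1 + g u.2

/-- `F(u) = (−Aᵀy, Ax)`. -/
def pdF {n m : ℕ} (A : Matrix (Fin m) (Fin n) ℝ) (u : PDVec n m) : PDVec n m :=
  (-(Aᵀ.mulVec u.2), A.mulVec u.1)

/-- `Q = [[r·Iₙ, Aᵀ], [α·A, s·Iₘ]]`. -/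
def pdQ {n m : ℕ} (A : Matrix (Fin m) (Fin n) ℝ) (r s α : ℝ) :
    Matrix (Fin n ⊕ Fin m) (Fin n ⊕ Fin m) ℝ :=
  Matrix.fromBlocks (r • 1) Aᵀ (α • A) (s • 1)

/-- `M = [[Iₙ, 0], [−((1−α)/s)·A, Iₘ]]`. -/
def pdM {n m : ℕ} (A : Matrix (Fin m) (Fin n) ℝ) (s α : ℝ) :
    Matrix (Fin n ⊕ Fin m) (Fin n ⊕ Fin m) ℝ :=
  Matrix.fromBlocks 1 0 (-(((1 - α) / s) • A)) 1

/-- `H = [[r·Iₙ + ((1−α)/s)·AᵀA, Aᵀ], [A, s·Iₘ]]`. -/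
def pdH {n m : ℕ} (A : Matrix (Fin m) (Fin n) ℝ) (r s α : ℝ) :
    Matrix (Fin n ⊕ Fin m) (Fin n ⊕ Fin m) ℝ :=
  Matrix.fromBlocks (r • 1 + ((1 - α) / s) • (Aᵀ * A)) Aᵀ A (s • 1)

/-- `G = [[r·Iₙ + (α(1−α)/s)·AᵀA, Aᵀ], [A, s·Iₘ]]`. -/
def pdG {n m : ℕ} (A : Matrix (Fin m) (Fin n) ℝ) (r s α : ℝ) :
    Matrix (Fin n ⊕ Fin m) (Fin n ⊕ Fin m) ℝ :=
  Matrix.fromBlocks (r • 1 + ((α * (1 - α)) / s) • (Aᵀ * A)) Aᵀ A (s • 1)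

/-- `‖v‖²_S = vᵀ S v`. -/
def pdNormSq {k : Type*} [Fintype k] (S : Matrix k k ℝ) (v : k → ℝ) : ℝ :=
  v ⬝ᵥ S.mulVec v

/-- `ut` is a prediction from `uk`: its first component minimizes
`x ↦ f(x) − (yᵏ)ᵀAx + (r/2)‖x − xᵏ‖²` over `X`, and its second component minimizes
`y ↦ g(y) + yᵀA(x̃ᵏ + α(x̃ᵏ − xᵏ)) + (s/2)‖y − yᵏ‖²` over `Y`. -/
def IsPrediction {n m : ℕ} (X : Set (Fin n → ℝ)) (Y : Set (Fin m → ℝ))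
    (f : (Fin n → ℝ) → ℝ) (g : (Fin m → ℝ) → ℝ)
    (A : Matrix (Fin m) (Fin n) ℝ) (r s α : ℝ) (uk ut : PDVec n m) : Prop :=
  ut.1 ∈ X ∧
  (∀ x ∈ X,
      f ut.1 - uk.2 ⬝ᵥ A.mulVec ut.1 + r / 2 * ((ut.1 - uk.1) ⬝ᵥ (ut.1 - uk.1)) ≤
        f x - uk.2 ⬝ᵥ A.mulVec x + r / 2 * ((x - uk.1) ⬝ᵥ (x - uk.1))) ∧
  ut.2 ∈ Y ∧
  (∀ y ∈ Y,
      g ut.2 + ut.2 ⬝ᵥ A.mulVec (ut.1 + α • (ut.1 - uk.1)) +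
          s / 2 * ((ut.2 - uk.2) ⬝ᵥ (ut.2 - uk.2)) ≤
        g y + y ⬝ᵥ A.mulVec (ut.1 + α • (ut.1 - uk.1)) +
          s / 2 * ((y - uk.2) ⬝ᵥ (y - uk.2)))

/-- The solution set `Ω*` of the variational inequality `VI(Ω, F, θ)`. -/
def VISol {n m : ℕ} (X : Set (Fin n → ℝ)) (Y : Set (Fin m → ℝ))
    (f : (Fin n → ℝ) → ℝ) (g : (Fin m → ℝ) → ℝ)
    (A : Matrix (Fin m) (Fin n) ℝ) : Set (PDVec n m) :=
  {u | u.1 ∈ X ∧ u.2 ∈ Y ∧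
    ∀ v : PDVec n m, v.1 ∈ X → v.2 ∈ Y →
      pdTheta f g v - pdTheta f g u + (pdToVec v - pdToVec u) ⬝ᵥ pdToVec (pdF A u) ≥ 0}

private lemma dot_self_nonneg' {k : Type*} [Fintype k] (v : k → ℝ) : 0 ≤ v ⬝ᵥ v :=
  Finset.sum_nonneg fun i _ => mul_self_nonneg (v i)

private lemma small_t (a C : ℝ) (hC : 0 ≤ C)
    (h : ∀ t : ℝ, 0 < t → t ≤ 1 → 0 ≤ a + t * C) : 0 ≤ a := by
  by_contra h'
  push_neg at h'
  have hne : (0:ℝ) < -a / (2 * (C + 1)) := div_pos (by linarith) (by linarith)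
  have ht := h (min 1 (-a / (2 * (C + 1)))) (lt_min one_pos hne) (min_le_left _ _)
  have h2 : min 1 (-a / (2 * (C + 1))) * C ≤ (-a / (2 * (C + 1))) * C :=
    mul_le_mul_of_nonneg_right (min_le_right _ _) hC
  have h3 : (-a / (2 * (C + 1))) * C < -a := by
    rw [div_mul_eq_mul_div, div_lt_iff₀ (by positivity)]
    nlinarith
  linarith

private lemma dot_transpose' {k l : Type*} [Fintype k] [Fintype l] (M : Matrix k l ℝ)
    (x : l → ℝ) (v : k → ℝ) : x ⬝ᵥ (Mᵀ *ᵥ v) = (M *ᵥ x) ⬝ᵥ v := by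
  rw [Matrix.dotProduct_mulVec, Matrix.vecMul_transpose]

private lemma dot_mulVec_left {k l : Type*} [Fintype k] [Fintype l] (M : Matrix k l ℝ)
    (x : l → ℝ) (y : k → ℝ) : (M *ᵥ x) ⬝ᵥ y = x ⬝ᵥ (Mᵀ *ᵥ y) := by
  rw [dotProduct_comm, Matrix.dotProduct_mulVec, ← Matrix.mulVec_transpose, dotProduct_comm]

private lemma min_vi {k : ℕ} {X : Set (Fin k → ℝ)} (hX : Convex ℝ X)
    {f : (Fin k → ℝ) → ℝ} (hf : ConvexOn ℝ Set.univ f)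
    (b x0 : Fin k → ℝ) {ρ : ℝ} (hρ : 0 ≤ ρ)
    {xt : Fin k → ℝ} (hxt : xt ∈ X)
    (hmin : ∀ x ∈ X, f xt + b ⬝ᵥ xt + ρ / 2 * ((xt - x0) ⬝ᵥ (xt - x0)) ≤
        f x + b ⬝ᵥ x + ρ / 2 * ((x - x0) ⬝ᵥ (x - x0)))
    {x : Fin k → ℝ} (hx : x ∈ X) :
    0 ≤ f x - f xt + (x - xt) ⬝ᵥ (b + ρ • (xt - x0)) := by
  have hD : 0 ≤ (x - xt) ⬝ᵥ (x - xt) := dot_self_nonneg' _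
  apply small_t _ (ρ / 2 * ((x - xt) ⬝ᵥ (x - xt))) (by positivity)
  intro t ht0 ht1
  have hz : (1 - t) • xt + t • x ∈ X := hX hxt hx (by linarith) ht0.le (by ring)
  have hfz : f ((1 - t) • xt + t • x) ≤ (1 - t) * f xt + t * f x :=
    hf.2 (Set.mem_univ xt) (Set.mem_univ x) (by linarith) ht0.le (by ring)
  have hm := hmin _ hz
  have hb : b ⬝ᵥ ((1 - t) • xt + t • x) = (1 - t) * (b ⬝ᵥ xt) + t * (b ⬝ᵥ x) := by
    simp [dotProduct_add, dotProduct_smul, smul_eq_mul]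
  have hzx : ((1 - t) • xt + t • x) - x0 = (xt - x0) + t • (x - xt) := by
    funext i; simp; ring
  have hq : (((1 - t) • xt + t • x) - x0) ⬝ᵥ (((1 - t) • xt + t • x) - x0) =
      (xt - x0) ⬝ᵥ (xt - x0) + 2 * t * ((x - xt) ⬝ᵥ (xt - x0))
        + t ^ 2 * ((x - xt) ⬝ᵥ (x - xt)) := by
    rw [hzx]
    rw [dotProduct_add, add_dotProduct, add_dotProduct, dotProduct_smul, dotProduct_smul,
      smul_dotProduct, smul_dotProduct, dotProduct_comm (xt - x0) (x - xt)]
    simp [smul_eq_mul]; ring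
  have hexp : (x - xt) ⬝ᵥ (b + ρ • (xt - x0)) =
      (x - xt) ⬝ᵥ b + ρ * ((x - xt) ⬝ᵥ (xt - x0)) := by
    rw [dotProduct_add, dotProduct_smul, smul_eq_mul]
  have hxb : (x - xt) ⬝ᵥ b = b ⬝ᵥ x - b ⬝ᵥ xt := by
    rw [dotProduct_comm, dotProduct_sub]
  rw [hexp, hxb]
  rw [hb, hq] at hm
  have key : 0 ≤ t * (f x - f xt) + t * (b ⬝ᵥ x - b ⬝ᵥ xt)
      + t * (ρ * ((x - xt) ⬝ᵥ (xt - x0))) + t * (t * (ρ / 2 * ((x - xt) ⬝ᵥ (x - xt)))) := by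
    nlinarith [hm, hfz]
  have := (mul_nonneg_iff_of_pos_left ht0).mp
    (by nlinarith [key] : 0 ≤ t * ((f x - f xt) + (b ⬝ᵥ x - b ⬝ᵥ xt)
      + ρ * ((x - xt) ⬝ᵥ (xt - x0)) + t * (ρ / 2 * ((x - xt) ⬝ᵥ (x - xt)))))
  linarith

private lemma matsimp {n m : ℕ} (A : Matrix (Fin m) (Fin n) ℝ) (r s α : ℝ) (hs : s ≠ 0) :
    pdH A r s α * pdM A s α = pdQ A r s α := by
  rw [pdH, pdM, pdQ, fromBlocks_multiply, fromBlocks_inj]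
  refine ⟨?_, ?_, ?_, ?_⟩
  · rw [Matrix.mul_one, Matrix.mul_neg, Matrix.mul_smul]; abel
  · simp
  · rw [Matrix.mul_one, Matrix.mul_neg, Matrix.smul_mul, Matrix.one_mul, smul_smul]
    ext i j
    simp only [Matrix.add_apply, Matrix.neg_apply, Matrix.smul_apply, smul_eq_mul]
    field_simp
    ring
  · simp

private lemma matsimp2 {n m : ℕ} (A : Matrix (Fin m) (Fin n) ℝ) (r s α : ℝ) (hs : s ≠ 0) :
    (pdM A s α)ᵀ * pdQ A r s α + pdG A r s α = pdQ A r s α + (pdQ A r s α)ᵀ := by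
  rw [pdM, pdQ, pdG, fromBlocks_transpose, fromBlocks_transpose, fromBlocks_multiply,
    fromBlocks_add, fromBlocks_add, fromBlocks_inj]
  simp only [transpose_one, transpose_zero, transpose_neg, transpose_smul, transpose_transpose,
    Matrix.one_mul, Matrix.mul_one, Matrix.zero_mul, Matrix.mul_zero, add_zero, zero_add,
    Matrix.neg_mul, Matrix.smul_mul, Matrix.mul_smul, smul_smul, smul_zero]
  refine ⟨?_, ?_, ?_, ?_⟩
  · ext i j
    simp only [Matrix.add_apply, Matrix.neg_apply, Matrix.smul_apply, smul_eq_mul]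
    field_simp
    ring
  · ext i j
    simp only [Matrix.add_apply, Matrix.neg_apply, Matrix.smul_apply, smul_eq_mul,
      Matrix.transpose_apply]
    field_simp
    ring
  · trivial
  · trivial

private lemma matsimp3 {n m : ℕ} (A : Matrix (Fin m) (Fin n) ℝ) (r s α : ℝ) :
    (pdH A r s α)ᵀ = pdH A r s α := by
  rw [pdH, fromBlocks_transpose]
  simp [transpose_add, transpose_smul, transpose_one, Matrix.transpose_mul, transpose_transpose]

private lemma pdToVec_sub {n m : ℕ} (u v : PDVec n m) :
    pdToVec u - pdToVec v = Sum.elim (u.1 - v.1) (u.2 - v.2) := by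
  funext i; cases i <;> simp [pdToVec]

/-- Contraction theorem (3.16). -/
theorem stmt_8 (n m : ℕ) (hn : 0 < n) (hm : 0 < m)
    (X : Set (Fin n → ℝ)) (Y : Set (Fin m → ℝ))
    (hXne : X.Nonempty) (hXcl : IsClosed X) (hXcv : Convex ℝ X)
    (hYne : Y.Nonempty) (hYcl : IsClosed Y) (hYcv : Convex ℝ Y)
    (f : (Fin n → ℝ) → ℝ) (g : (Fin m → ℝ) → ℝ)
    (hf : ConvexOn ℝ Set.univ f) (hg : ConvexOn ℝ Set.univ g)
    (A : Matrix (Fin m) (Fin n) ℝ) (r s α : ℝ) (hr : 0 < r) (hs : 0 < s)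
    (uk ut uk1 : PDVec n m)
    (hpred : IsPrediction X Y f g A r s α uk ut)
    (hcorr : pdToVec uk1 = pdToVec uk - (pdM A s α).mulVec (pdToVec uk - pdToVec ut)) :
    ∀ ustar ∈ VISol X Y f g A,
      pdNormSq (pdH A r s α) (pdToVec uk1 - pdToVec ustar) ≤
        pdNormSq (pdH A r s α) (pdToVec uk - pdToVec ustar) -
          pdNormSq (pdG A r s α) (pdToVec uk - pdToVec ut) := by
  intro us hus
  obtain ⟨hutX, hminx, hutY, hminy⟩ := hpred
  obtain ⟨husX, husY, hVI⟩ := hus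
  have hs0 : s ≠ 0 := ne_of_gt hs
  -- first prediction VI
  have I1 : 0 ≤ f us.1 - f ut.1 +
      (us.1 - ut.1) ⬝ᵥ ((-(Aᵀ *ᵥ uk.2)) + r • (ut.1 - uk.1)) := by
    refine min_vi hXcv hf _ uk.1 hr.le hutX ?_ husX
    intro x hx
    have h := hminx x hx
    have e : ∀ z : Fin n → ℝ, (-(Aᵀ *ᵥ uk.2)) ⬝ᵥ z = -(uk.2 ⬝ᵥ (A *ᵥ z)) := by
      intro z
      rw [neg_dotProduct, dotProduct_comm, dot_transpose' A z uk.2, dotProduct_comm]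
    rw [e, e]
    linarith
  -- second prediction VI
  have I2 : 0 ≤ g us.2 - g ut.2 +
      (us.2 - ut.2) ⬝ᵥ ((A *ᵥ (ut.1 + α • (ut.1 - uk.1))) + s • (ut.2 - uk.2)) := by
    refine min_vi hYcv hg _ uk.2 hs.le hutY ?_ husY
    intro y hy
    have h := hminy y hy
    have e : ∀ z : Fin m → ℝ,
        (A *ᵥ (ut.1 + α • (ut.1 - uk.1))) ⬝ᵥ z = z ⬝ᵥ (A *ᵥ (ut.1 + α • (ut.1 - uk.1))) :=
      fun z => dotProduct_comm _ _
    rw [e, e]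
    linarith
  -- VI at the solution, evaluated at the predictor
  have I3 := hVI ut hutX hutY
  -- the key inequality
  have hKey : 0 ≤ (pdToVec ut - pdToVec us) ⬝ᵥ
      ((pdQ A r s α) *ᵥ (pdToVec uk - pdToVec ut)) := by
    rw [pdToVec_sub, pdToVec_sub, pdQ, fromBlocks_mulVec, sumElim_dotProduct_sumElim]
    rw [pdTheta, pdTheta, pdToVec_sub, pdF, pdToVec] at I3
    rw [sumElim_dotProduct_sumElim] at I3
    simp only [smul_mulVec, one_mulVec, Matrix.mulVec_add, Matrix.mulVec_sub,
      Matrix.mulVec_smul, dotProduct_add, add_dotProduct, dotProduct_sub, sub_dotProduct,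
      dotProduct_smul, smul_dotProduct, dotProduct_neg, neg_dotProduct, dot_transpose',
      smul_eq_mul, smul_sub, Sum.elim_comp_inl, Sum.elim_comp_inr] at I1 I2 I3 ⊢
    linarith [I1, I2, I3,
      dotProduct_comm (us.2) (A *ᵥ ut.1), dotProduct_comm (us.2) (A *ᵥ us.1),
      dotProduct_comm (ut.2) (A *ᵥ ut.1), dotProduct_comm (ut.2) (A *ᵥ us.1),
      dotProduct_comm (uk.2) (A *ᵥ ut.1), dotProduct_comm (uk.2) (A *ᵥ us.1),
      dotProduct_comm (us.2) (A *ᵥ uk.1), dotProduct_comm (ut.2) (A *ᵥ uk.1),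
      dotProduct_comm (uk.2) (A *ᵥ uk.1)]
  -- correction step rewrite
  set vd := pdToVec uk - pdToVec ut with hvd
  set w := pdToVec uk - pdToVec us with hw
  have hw1 : pdToVec uk1 - pdToVec us = w - (pdM A s α) *ᵥ vd := by
    rw [hcorr, hw]; abel
  have hwd : pdToVec ut - pdToVec us = w - vd := by
    rw [hw, hvd]; abel
  rw [hwd] at hKey
  set u := (pdM A s α) *ᵥ vd with hu
  -- matrix-identities in action
  have hHu : pdH A r s α *ᵥ u = pdQ A r s α *ᵥ vd := by
    rw [hu, Matrix.mulVec_mulVec, matsimp A r s α hs0]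
  have hHsymm : ∀ x y : Fin n ⊕ Fin m → ℝ,
      x ⬝ᵥ (pdH A r s α *ᵥ y) = y ⬝ᵥ (pdH A r s α *ᵥ x) := by
    intro x y
    rw [Matrix.dotProduct_mulVec, ← Matrix.mulVec_transpose, matsimp3, dotProduct_comm]
  have hMQsub : (pdM A s α)ᵀ * pdQ A r s α =
      pdQ A r s α + (pdQ A r s α)ᵀ - pdG A r s α :=
    eq_sub_of_add_eq (matsimp2 A r s α hs0)
  have huHu : u ⬝ᵥ (pdH A r s α *ᵥ u) =
      2 * (vd ⬝ᵥ (pdQ A r s α *ᵥ vd)) - vd ⬝ᵥ (pdG A r s α *ᵥ vd) := by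
    rw [hHu]
    nth_rewrite 1 [hu]
    rw [dot_mulVec_left, Matrix.mulVec_mulVec, hMQsub,
      Matrix.sub_mulVec, Matrix.add_mulVec, dotProduct_sub, dotProduct_add,
      dot_transpose' (pdQ A r s α) vd vd, dotProduct_comm (pdQ A r s α *ᵥ vd) vd]
    ring
  -- expand the H-norm of the corrected iterate
  have Efin : pdNormSq (pdH A r s α) (pdToVec uk1 - pdToVec us) =
      pdNormSq (pdH A r s α) w - pdNormSq (pdG A r s α) vd -
        2 * ((w - vd) ⬝ᵥ (pdQ A r s α *ᵥ vd)) := by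
    rw [pdNormSq, pdNormSq, pdNormSq, hw1]
    have e1 : (w - u) ⬝ᵥ (pdH A r s α *ᵥ (w - u)) =
        w ⬝ᵥ (pdH A r s α *ᵥ w) - u ⬝ᵥ (pdH A r s α *ᵥ w) -
          (w ⬝ᵥ (pdH A r s α *ᵥ u) - u ⬝ᵥ (pdH A r s α *ᵥ u)) := by
      simp only [Matrix.mulVec_sub, dotProduct_sub, sub_dotProduct]
    rw [e1, hHsymm u w, huHu, hHu]
    simp only [hw, hvd, sub_dotProduct, add_dotProduct, neg_dotProduct]
    ring
  rw [Efin]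
  linarith [hKey]
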